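/- Let n ≥ 1, let A be the n×n prefix-sum matrix, and let C = diag(c_1, …, c_n) be any diagonal matrix with positive diagonal entries. Then (1/√n)·‖A C^{-1}‖_F·‖Ce‖₂ ≥ (1/√n) ∑_{j=1}^{n} √j, with equality when c_j = (n − j + 1)^{1/4} for all j; that is, the diagonal matrix with entries (n − j + 1)^{1/4} is optimal among all positive diagonal factorizations for the full-batch RMSE. -/

import Mathlib

open Finset

/-- Euclidean norm of a vector in `ℝⁿ`. -/
noncomputable def norm2 {n : ℕ} (v : Fin n → ℝ) : ℝ := Real.sqrt (∑ i, v i ^ 2)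

/-- Frobenius norm of a square matrix. -/
noncomputable def frob {n : ℕ} (B : Matrix (Fin n) (Fin n) ℝ) : ℝ :=
  Real.sqrt (∑ i, ∑ j, B i j ^ 2)

/-- `‖B‖_{2→∞}`: the maximum Euclidean norm of a row of `B`. -/
noncomputable def rowMax {n : ℕ} (B : Matrix (Fin n) (Fin n) ℝ) : ℝ :=
  ⨆ i : Fin n, norm2 (fun j => B i j)

/-- The `n × n` prefix-sum matrix: lower triangular, all entries on or below the diagonal are 1. -/
def Amat (n : ℕ) : Matrix (Fin n) (Fin n) ℝ :=
  fun i j => if (j : ℕ) ≤ (i : ℕ) then 1 else 0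

/-- The DP-λCGD strategy matrix `C_λ`: lower triangular Toeplitz with `(C_λ)_{ij} = λ^{i-j}`. -/
noncomputable def Cmat (n : ℕ) (l : ℝ) : Matrix (Fin n) (Fin n) ℝ :=
  fun i j => if (j : ℕ) ≤ (i : ℕ) then l ^ ((i : ℕ) - (j : ℕ)) else 0

/-- The inverse `C_λ⁻¹`: ones on the diagonal, `-λ` on the first subdiagonal, zero elsewhere. -/
noncomputable def Cinvmat (n : ℕ) (l : ℝ) : Matrix (Fin n) (Fin n) ℝ :=
  fun i j => if (i : ℕ) = (j : ℕ) then 1 else if (i : ℕ) = (j : ℕ) + 1 then -l else 0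

/-- `sens_{k,b}(C)`: Euclidean norm of `∑_{j=0}^{k-1} C_{:,jb+1}` (columns 1-indexed, so the
column of 1-based index `j*b + 1` is the column of `Fin`-index `j*b`). -/
noncomputable def sens (n k b : ℕ) (C : Matrix (Fin n) (Fin n) ℝ) : ℝ :=
  norm2 (fun i => ∑ j ∈ Finset.range k, if h : j * b < n then C i ⟨j * b, h⟩ else 0)

/-- `d_j`: Euclidean norm of the `j`-th column of `C_λ`. -/
noncomputable def dcol (n : ℕ) (l : ℝ) (j : Fin n) : ℝ :=
  norm2 (fun i => Cmat n l i j)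

/-- The column-normalized DP-λCGD strategy matrix `C̃ = C_λ D⁻¹`. -/
noncomputable def Ctil (n : ℕ) (l : ℝ) : Matrix (Fin n) (Fin n) ℝ :=
  Cmat n l * (Matrix.diagonal (dcol n l))⁻¹

lemma diag_inv {n : ℕ} (c : Fin n → ℝ) (hc : ∀ j, c j ≠ 0) :
    (Matrix.diagonal c)⁻¹ = Matrix.diagonal (fun j => (c j)⁻¹) := by
  apply Matrix.inv_eq_right_inv
  have h : (fun i => c i * (c i)⁻¹) = fun _ => (1:ℝ) :=
    funext fun j => mul_inv_cancel₀ (hc j)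
  rw [Matrix.diagonal_mul_diagonal, h, Matrix.diagonal_one]

lemma myCardFilter (n : ℕ) (j : Fin n) :
    (Finset.univ.filter fun i : Fin n => (j:ℕ) ≤ (i:ℕ)).card = n - (j:ℕ) := by
  rw [← Fin.card_Ici j]
  congr 1
  ext i
  simp only [Finset.mem_filter, Finset.mem_Ici, Finset.mem_univ, true_and, Fin.le_def]

lemma frob_sq_eq (n : ℕ) (c : Fin n → ℝ) (hc : ∀ j, c j ≠ 0) :
    ∑ i, ∑ j, ((Amat n * (Matrix.diagonal c)⁻¹) i j)^2
      = ∑ j : Fin n, ((n - (j:ℕ) : ℕ):ℝ) * ((c j)⁻¹)^2 := by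
  rw [Finset.sum_comm]
  refine Finset.sum_congr rfl fun j _ => ?_
  have h : ∀ i : Fin n, ((Amat n * (Matrix.diagonal c)⁻¹) i j)^2
      = if (j:ℕ) ≤ (i:ℕ) then ((c j)⁻¹)^2 else 0 := by
    intro i
    rw [diag_inv c hc, Matrix.mul_diagonal]
    simp only [Amat]
    split <;> simp
  simp only [h]
  rw [Finset.sum_ite, Finset.sum_const_zero, add_zero, Finset.sum_const,
    nsmul_eq_mul, myCardFilter]

lemma norm2_diag_mulVec {n : ℕ} (c : Fin n → ℝ) :
    norm2 ((Matrix.diagonal c).mulVec (fun _ => 1)) = Real.sqrt (∑ j, c j ^ 2) := by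
  simp [norm2, Matrix.mulVec_diagonal]

lemma sum_sqrt_reindex (n : ℕ) :
    ∑ j : Fin n, Real.sqrt ((n - (j:ℕ) : ℕ):ℝ) = ∑ k ∈ Finset.Icc 1 n, Real.sqrt k := by
  rw [← Finset.Ico_add_one_right_eq_Icc, Finset.sum_Ico_eq_sum_range]
  simp only [Nat.add_sub_cancel]
  rw [Fin.sum_univ_eq_sum_range (fun j => Real.sqrt ((n - j : ℕ):ℝ)) n,
    ← Finset.sum_range_reflect (fun j => Real.sqrt ((1 + j : ℕ):ℝ)) n]
  refine Finset.sum_congr rfl fun j hj => ?_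
  rw [Finset.mem_range] at hj
  congr 2
  omega

lemma sqrt_expr {n : ℕ} (j : Fin n) :
    let x : ℝ := ((n - (j:ℕ) : ℕ):ℝ)
    0 < x ∧ x * ((x ^ ((1:ℝ)/4))⁻¹)^2 = Real.sqrt x ∧ (x ^ ((1:ℝ)/4))^2 = Real.sqrt x := by
  intro x
  have hx : (0:ℝ) < x := by
    show (0:ℝ) < ((n - (j:ℕ) : ℕ):ℝ)
    have := j.isLt
    have h1 : 0 < n - (j:ℕ) := by omega
    exact_mod_cast h1
  refine ⟨hx, ?_, ?_⟩
  · rw [← Real.rpow_neg hx.le, ← Real.rpow_natCast (x ^ (-((1:ℝ)/4))) 2,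
      ← Real.rpow_mul hx.le]
    nth_rewrite 1 [← Real.rpow_one x]
    rw [← Real.rpow_add hx, Real.sqrt_eq_rpow]
    norm_num
  · rw [← Real.rpow_natCast (x ^ ((1:ℝ)/4)) 2, ← Real.rpow_mul hx.le,
      Real.sqrt_eq_rpow]
    norm_num

/-- among all diagonal strategy matrices with positive diagonal entries,
the full-batch RMSE (1/√n)·‖A C⁻¹‖_F·‖Ce‖₂ is at least (1/√n)∑_{j=1}^n √j, with
equality for the diagonal entries (n − j + 1)^{1/4}. -/
theorem stmt_10 (n : ℕ) (hn : 1 ≤ n) :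
    (∀ c : Fin n → ℝ, (∀ j, 0 < c j) →
      (1 / Real.sqrt n) * ∑ j ∈ Finset.Icc 1 n, Real.sqrt j ≤
      (1 / Real.sqrt n) * frob (Amat n * (Matrix.diagonal c)⁻¹) *
        norm2 ((Matrix.diagonal c).mulVec (fun _ => 1))) ∧
    (1 / Real.sqrt n) *
      frob (Amat n *
        (Matrix.diagonal (fun j : Fin n => ((n - (j : ℕ) : ℕ) : ℝ) ^ ((1 : ℝ) / 4)))⁻¹) *
      norm2 ((Matrix.diagonal
          (fun j : Fin n => ((n - (j : ℕ) : ℕ) : ℝ) ^ ((1 : ℝ) / 4))).mulVec (fun _ => 1)) =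
      (1 / Real.sqrt n) * ∑ j ∈ Finset.Icc 1 n, Real.sqrt j := by
  constructor
  · intro c hc
    have hne : ∀ j, c j ≠ 0 := fun j => (hc j).ne'
    set F : ℝ := ∑ j : Fin n, ((n - (j:ℕ) : ℕ):ℝ) * ((c j)⁻¹)^2 with hF
    set G : ℝ := ∑ j : Fin n, c j ^ 2 with hG
    have hfrob : frob (Amat n * (Matrix.diagonal c)⁻¹) = Real.sqrt F := by
      rw [frob, frob_sq_eq n c hne]
    have hF0 : 0 ≤ F := Finset.sum_nonneg fun j _ => by positivity
    have hS0 : 0 ≤ ∑ j : Fin n, Real.sqrt ((n - (j:ℕ) : ℕ):ℝ) :=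
      Finset.sum_nonneg fun j _ => Real.sqrt_nonneg _
    have key : (∑ k ∈ Finset.Icc 1 n, Real.sqrt k) ≤ Real.sqrt F * Real.sqrt G := by
      rw [← sum_sqrt_reindex n, ← Real.sqrt_mul hF0]
      rw [Real.le_sqrt hS0 (by positivity)]
      calc (∑ j : Fin n, Real.sqrt ((n - (j:ℕ) : ℕ):ℝ))^2
          = (∑ j : Fin n, (Real.sqrt ((n - (j:ℕ) : ℕ):ℝ) * (c j)⁻¹) * c j)^2 := by
            congr 1
            refine Finset.sum_congr rfl fun j _ => ?_
            rw [mul_assoc, inv_mul_cancel₀ (hne j), mul_one]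
        _ ≤ (∑ j : Fin n, (Real.sqrt ((n - (j:ℕ) : ℕ):ℝ) * (c j)⁻¹)^2) * ∑ j : Fin n, c j ^ 2 :=
            Finset.sum_mul_sq_le_sq_mul_sq _ _ _
        _ = F * G := by
            congr 1
            refine Finset.sum_congr rfl fun j _ => ?_
            rw [mul_pow, Real.sq_sqrt (by positivity)]
    rw [hfrob, norm2_diag_mulVec, mul_assoc]
    exact mul_le_mul_of_nonneg_left key (by positivity)
  · set c : Fin n → ℝ := fun j => ((n - (j:ℕ) : ℕ):ℝ) ^ ((1:ℝ)/4) with hcdef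
    have hprops := fun j : Fin n => sqrt_expr j
    have hne : ∀ j, c j ≠ 0 := fun j => by
      have h := (hprops j).1
      exact (Real.rpow_pos_of_pos h _).ne'
    have hfrob : frob (Amat n * (Matrix.diagonal c)⁻¹)
        = Real.sqrt (∑ j : Fin n, Real.sqrt ((n - (j:ℕ) : ℕ):ℝ)) := by
      rw [frob, frob_sq_eq n c hne]
      congr 1
      exact Finset.sum_congr rfl fun j _ => (hprops j).2.1
    have hnorm : norm2 ((Matrix.diagonal c).mulVec (fun _ => 1))
        = Real.sqrt (∑ j : Fin n, Real.sqrt ((n - (j:ℕ) : ℕ):ℝ)) := by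
      rw [norm2_diag_mulVec]
      congr 1
      exact Finset.sum_congr rfl fun j _ => (hprops j).2.2
    have hS0 : 0 ≤ ∑ j : Fin n, Real.sqrt ((n - (j:ℕ) : ℕ):ℝ) :=
      Finset.sum_nonneg fun j _ => Real.sqrt_nonneg _
    rw [hfrob, hnorm, mul_assoc, Real.mul_self_sqrt hS0, sum_sqrt_reindex]
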